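/- Let V be a finite type with n = Fintype.card V and E : Fin m → Sym2 V a multigraph on V. If G is decodable, then m ≥ n. -/

import Mathlib

/-- `e` is a loop index at vertex `v`. -/
def IsLoopIdx {V : Type*} {m : ℕ} (E : Fin m → Sym2 V) (v : V) (e : Fin m) : Prop :=
  E e = Sym2.diag v

/-- `u` and `v` are connected in the multigraph `E` with the edge indices in `S` deleted. -/
def ConnectedMod {V : Type*} {m : ℕ} (E : Fin m → Sym2 V) (S : Finset (Fin m))
    (u v : V) : Prop :=
  Relation.EqvGen (fun a b => ∃ e : Fin m, e ∉ S ∧ E e = s(a, b)) u v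

/-- `G − S` is decodable: every vertex is connected in `G − S` to a vertex with a loop
outside `S`. -/
def DecodableMod {V : Type*} {m : ℕ} (E : Fin m → Sym2 V) (S : Finset (Fin m)) : Prop :=
  ∀ u : V, ∃ v : V, (∃ e : Fin m, e ∉ S ∧ IsLoopIdx E v e) ∧ ConnectedMod E S u v

def IsDecodable {V : Type*} {m : ℕ} (E : Fin m → Sym2 V) : Prop :=
  DecodableMod E ∅

/-- `c_x^G`: the number of `x`-element sets of edge indices whose deletion leaves a
decodable graph. -/
noncomputable def cG {V : Type*} {m : ℕ} (E : Fin m → Sym2 V) (x : ℕ) : ℕ :=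
  Set.ncard {S : Finset (Fin m) | S.card = x ∧ DecodableMod E S}

/-- `k_x^G = C(m,x) − c_x^G`. -/
noncomputable def kG {V : Type*} {m : ℕ} (E : Fin m → Sym2 V) (x : ℕ) : ℕ :=
  Nat.choose m x - cG E x

/-- `m(G)`: the minimum cardinality of a loop cut. -/
noncomputable def mCut {V : Type*} {m : ℕ} (E : Fin m → Sym2 V) : ℕ :=
  sInf {k : ℕ | ∃ S : Finset (Fin m), S.card = k ∧ ¬ DecodableMod E S}

/-- incidence degree of `v` (a loop at `v` counts once). -/
noncomputable def dI {V : Type*} {m : ℕ} (E : Fin m → Sym2 V) (v : V) : ℕ :=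
  Set.ncard {e : Fin m | v ∈ E e}

/-- `δ_I(G)`: the minimum incidence degree. -/
noncomputable def deltaI {V : Type*} {m : ℕ} (E : Fin m → Sym2 V) : ℕ :=
  sInf (Set.range (dI E))

/-- `L_G`: the number of loop indices. -/
noncomputable def LG {V : Type*} {m : ℕ} (E : Fin m → Sym2 V) : ℕ :=
  Set.ncard {e : Fin m | ∃ v : V, E e = Sym2.diag v}

/-- `δ_ℓ(v)`: the number of loop indices at `v`. -/
noncomputable def loopsAt {V : Type*} {m : ℕ} (E : Fin m → Sym2 V) (v : V) : ℕ :=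
  Set.ncard {e : Fin m | E e = Sym2.diag v}

/-- `Δ_ℓ(G)`: the maximum number of loops at a single vertex. -/
noncomputable def DeltaLoops {V : Type*} {m : ℕ} (E : Fin m → Sym2 V) : ℕ :=
  sSup (Set.range (loopsAt E))

/-- `κ_G`: the edge connectivity. -/
noncomputable def kappaG {V : Type*} {m : ℕ} (E : Fin m → Sym2 V) : ℕ :=
  sInf {k : ℕ | ∃ S : Finset (Fin m), S.card = k ∧ ∃ u v : V, ¬ ConnectedMod E S u v}

def Steps {V : Type*} (r : V → V → Prop) : ℕ → V → V → Prop
  | 0 => Eq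
  | n+1 => fun a b => ∃ c, r a c ∧ Steps r n c b

theorem steps_of_rtg {V : Type*} {r : V → V → Prop} {a b : V}
    (h : Relation.ReflTransGen r a b) : ∃ n, Steps r n a b := by
  induction h using Relation.ReflTransGen.head_induction_on with
  | refl => exact ⟨0, rfl⟩
  | head hr _ ih => exact ⟨ih.choose + 1, _, hr, ih.choose_spec⟩

theorem rtg_of_eqvGen {V : Type*} {r : V → V → Prop} (hs : Symmetric r) {a b : V}
    (h : Relation.EqvGen r a b) : Relation.ReflTransGen r a b := by
  induction h with
  | rel _ _ hr => exact Relation.ReflTransGen.single hr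
  | refl => exact Relation.ReflTransGen.refl
  | symm _ _ _ ih => haveI : Std.Symm r := ⟨hs⟩; exact Relation.ReflTransGen.symmetric.symm _ _ ih
  | trans _ _ _ _ _ ih1 ih2 => exact ih1.trans ih2

theorem stmt2 {V : Type*} [Fintype V] {m : ℕ} (E : Fin m → Sym2 V)
    (hdec : IsDecodable E) :
    Fintype.card V ≤ m := by
  classical
  let r : V → V → Prop := fun a b => ∃ e : Fin m, E e = s(a, b)
  have hsym : Symmetric r := by
    rintro a b ⟨e, he⟩; exact ⟨e, he.trans Sym2.eq_swap⟩
  have HP : ∀ v : V, ∃ n, ∃ w, Steps r n v w ∧ (∃ e, E e = Sym2.diag w) := by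
    intro u
    obtain ⟨v, ⟨⟨e, -, he⟩, hc⟩⟩ := hdec u
    have hr : Relation.ReflTransGen r u v := by
      apply rtg_of_eqvGen hsym
      refine Relation.EqvGen.mono ?_ _ _ hc
      rintro a b ⟨e', -, he'⟩; exact ⟨e', he'⟩
    obtain ⟨n, hn⟩ := steps_of_rtg hr
    exact ⟨n, v, hn, e, he⟩
  let d : V → ℕ := fun v => Nat.find (HP v)
  have key : ∀ v : V, ¬ (∃ e, E e = Sym2.diag v) →
      ∃ e c, E e = s(v, c) ∧ d c < d v := by
    intro v hv
    obtain ⟨w, hw, hloop⟩ := Nat.find_spec (HP v)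
    cases hn : d v with
    | zero =>
      rw [show Nat.find (HP v) = d v from rfl, hn] at hw
      exact absurd (hw ▸ hloop) hv
    | succ k =>
      rw [show Nat.find (HP v) = d v from rfl, hn] at hw
      obtain ⟨c, ⟨e, he⟩, hs⟩ := hw
      have hdc : d c ≤ k := Nat.find_le ⟨w, hs, hloop⟩
      exact ⟨e, c, he, by omega⟩
  let f : V → Fin m := fun v =>
    if h : ∃ e, E e = Sym2.diag v then h.choose else (key v h).choose
  have hf : Function.Injective f := by
    intro u v huv
    by_contra hne
    by_cases hu : ∃ e, E e = Sym2.diag u <;> by_cases hv : ∃ e, E e = Sym2.diag v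
    · simp only [f, dif_pos hu, dif_pos hv] at huv
      have h1 := hu.choose_spec
      have h2 := hv.choose_spec
      rw [huv, h2] at h1
      exact hne (Sym2.diag_injective h1).symm
    · simp only [f, dif_pos hu, dif_neg hv] at huv
      have h1 := hu.choose_spec
      obtain ⟨c, hc, -⟩ := (key v hv).choose_spec
      rw [← huv, h1] at hc
      rw [Sym2.diag, Sym2.eq_iff] at hc
      tauto
    · simp only [f, dif_neg hu, dif_pos hv] at huv
      have h1 := hv.choose_spec
      obtain ⟨c, hc, -⟩ := (key u hu).choose_spec
      rw [huv, h1] at hc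
      rw [Sym2.diag, Sym2.eq_iff] at hc
      tauto
    · simp only [f, dif_neg hu, dif_neg hv] at huv
      obtain ⟨c, hc, hdc⟩ := (key u hu).choose_spec
      obtain ⟨c', hc', hdc'⟩ := (key v hv).choose_spec
      rw [huv, hc'] at hc
      rw [Sym2.eq_iff] at hc
      rcases hc with ⟨h1, h2⟩ | ⟨h1, h2⟩
      · exact hne h1.symm
      · subst h1; subst h2; omega
  simpa using Fintype.card_le_of_injective f hf
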